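/- Let B₀ and B₁ be positive definite symmetric real d×d matrices. Then (B₁ − B₀) : (B₀⁻¹ − B₁⁻¹) ≥ 0, with equality if and only if B₀ = B₁. -/

import Mathlib

open Matrix

/-- The Frobenius inner product of two real matrices. -/
noncomputable def frobInner {d : ℕ} (A C : Matrix (Fin d) (Fin d) ℝ) : ℝ :=
  ∑ i, ∑ j, A i j * C i j

lemma frobInner_eq_trace {d : ℕ} (A C : Matrix (Fin d) (Fin d) ℝ) :
    frobInner A C = (Aᵀ * C).trace := by
  simp only [frobInner, Matrix.trace, Matrix.mul_apply, Matrix.diag, Matrix.transpose_apply]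
  rw [Finset.sum_comm]

section SqrtPort
open scoped MatrixOrder

noncomputable def Matrix.PosSemidef.sqrt {d : ℕ} {M : Matrix (Fin d) (Fin d) ℝ}
    (_ : M.PosSemidef) : Matrix (Fin d) (Fin d) ℝ := CFC.sqrt M

lemma Matrix.PosSemidef.posSemidef_sqrt {d : ℕ} {M : Matrix (Fin d) (Fin d) ℝ}
    (hM : M.PosSemidef) : hM.sqrt.PosSemidef := (CFC.sqrt_nonneg M).posSemidef

lemma Matrix.PosSemidef.sqrt_mul_self {d : ℕ} {M : Matrix (Fin d) (Fin d) ℝ}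
    (hM : M.PosSemidef) : hM.sqrt * hM.sqrt = M := CFC.sqrt_mul_sqrt_self M hM.nonneg

end SqrtPort

lemma sqrt_isUnit {d : ℕ} {M : Matrix (Fin d) (Fin d) ℝ} (hM : M.PosDef) :
    IsUnit hM.posSemidef.sqrt := by
  rw [Matrix.isUnit_iff_isUnit_det]
  have h : hM.posSemidef.sqrt.det * hM.posSemidef.sqrt.det = M.det := by
    rw [← Matrix.det_mul, hM.posSemidef.sqrt_mul_self]
  have : M.det ≠ 0 := hM.det_pos.ne'
  exact isUnit_iff_ne_zero.mpr (fun h0 => this (by rw [← h, h0, mul_zero]))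

/-- For positive definite symmetric real `d × d` matrices `B₀`, `B₁`,
`(B₁ - B₀) : (B₀⁻¹ - B₁⁻¹) ≥ 0`, with equality iff `B₀ = B₁`. -/
theorem frobInner_sub_inv_sub_nonneg {d : ℕ} (hd : 0 < d) (B₀ B₁ : Matrix (Fin d) (Fin d) ℝ)
    (h₀ : B₀.PosDef) (h₁ : B₁.PosDef) :
    0 ≤ frobInner (B₁ - B₀) (B₀⁻¹ - B₁⁻¹) ∧
      (frobInner (B₁ - B₀) (B₀⁻¹ - B₁⁻¹) = 0 ↔ B₀ = B₁) := by
  set D : Matrix (Fin d) (Fin d) ℝ := B₁ - B₀ with hDdef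
  have hDH : Dᵀ = D := by
    have := h₀.1; have := h₁.1
    rw [Matrix.IsHermitian, Matrix.conjTranspose_eq_transpose_of_trivial] at *
    simp [hDdef, Matrix.transpose_sub, ‹B₀ᵀ = B₀›, ‹B₁ᵀ = B₁›]
  haveI := h₀.isUnit.invertible
  haveI := h₁.isUnit.invertible
  set R : Matrix (Fin d) (Fin d) ℝ := h₀.inv.posSemidef.sqrt with hRdef
  set S : Matrix (Fin d) (Fin d) ℝ := h₁.inv.posSemidef.sqrt with hSdef
  have hRH : Rᵀ = R := by
    have := h₀.inv.posSemidef.posSemidef_sqrt.1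
    rwa [Matrix.IsHermitian, Matrix.conjTranspose_eq_transpose_of_trivial] at this
  have hSH : Sᵀ = S := by
    have := h₁.inv.posSemidef.posSemidef_sqrt.1
    rwa [Matrix.IsHermitian, Matrix.conjTranspose_eq_transpose_of_trivial] at this
  have hRR : R * R = B₀⁻¹ := h₀.inv.posSemidef.sqrt_mul_self
  have hSS : S * S = B₁⁻¹ := h₁.inv.posSemidef.sqrt_mul_self
  have hRu : IsUnit R := sqrt_isUnit h₀.inv
  have hSu : IsUnit S := sqrt_isUnit h₁.inv
  set N : Matrix (Fin d) (Fin d) ℝ := R * D * S with hNdef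
  -- B₀⁻¹ - B₁⁻¹ = B₀⁻¹ * D * B₁⁻¹
  have hE : B₀⁻¹ - B₁⁻¹ = B₀⁻¹ * D * B₁⁻¹ := by
    rw [hDdef, Matrix.mul_sub, Matrix.sub_mul, Matrix.mul_assoc,
      Matrix.mul_inv_of_invertible, Matrix.inv_mul_of_invertible]
    simp
  have key : frobInner D (B₀⁻¹ - B₁⁻¹) = frobInner N N := by
    rw [frobInner_eq_trace, frobInner_eq_trace, hDH, hE, ← hRR, ← hSS]
    have hNT : Nᵀ = S * D * R := by
      rw [hNdef, Matrix.transpose_mul, Matrix.transpose_mul, hRH, hSH, hDH]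
      rw [Matrix.mul_assoc]
    rw [hNT, hNdef]
    rw [show D * (R * R * D * (S * S)) = (D * R * R * D * S) * S by
          simp only [Matrix.mul_assoc],
        Matrix.trace_mul_comm,
        show S * (D * R * R * D * S) = (S * D * R) * (R * D * S) by
          simp only [Matrix.mul_assoc]]
  have hsq : frobInner N N = ∑ i, ∑ j, (N i j) ^ 2 := by
    simp [frobInner, sq]
  have hnonneg : 0 ≤ frobInner N N := by
    rw [hsq]
    exact Finset.sum_nonneg fun i _ => Finset.sum_nonneg fun j _ => sq_nonneg _
  refine ⟨key ▸ hnonneg, ?_⟩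
  rw [key, hsq]
  constructor
  · intro h0
    have hN0 : N = 0 := by
      ext i j
      have h1 := (Finset.sum_eq_zero_iff_of_nonneg
        (fun i _ => Finset.sum_nonneg fun j _ => sq_nonneg (N i j))).mp h0 i (Finset.mem_univ i)
      have h2 := (Finset.sum_eq_zero_iff_of_nonneg
        (fun j _ => sq_nonneg (N i j))).mp h1 j (Finset.mem_univ j)
      simpa using pow_eq_zero_iff (n := 2) (by norm_num) |>.mp h2
    have hD0 : D = 0 := by
      haveI := hRu.invertible
      haveI := hSu.invertible
      have : R⁻¹ * (R * D * S) * S⁻¹ = 0 := by rw [← hNdef, hN0]; simp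
      rwa [show R⁻¹ * (R * D * S) * S⁻¹ = R⁻¹ * R * D * (S * S⁻¹) by
             simp only [Matrix.mul_assoc],
           Matrix.inv_mul_of_invertible, Matrix.mul_inv_of_invertible,
           Matrix.one_mul, Matrix.mul_one] at this
    have := sub_eq_zero.mp (hDdef ▸ hD0)
    exact this.symm
  · intro h
    subst h
    simp [hNdef, hDdef]
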